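/- Let f : ℝⁿ → ℝ be twice continuously differentiable with L-Lipschitz Hessian on F. Suppose x ∈ F, x̂ ∈ F satisfies ∇f(x̂) = 0 and ∇²f(x̂) ⪰ 0, and x⁺ satisfies the stationarity condition 0 = ∇f(x) + ∇²f(x)(x⁺ − x) + (σ/2)‖x⁺ − x‖(x⁺ − x) for some σ > 0. Then ‖x⁺ − x‖ ≤ (1 + L/σ + √((1 + L/σ)² + L/σ))·‖x − x̂‖. -/

import Mathlib

open Set RealInnerProductSpace

set_option maxHeartbeats 1000000



lemma taylor_aux {E : Type*} [NormedAddCommGroup E] [NormedSpace ℝ E]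
    (g : E → E) (hg : ContDiff ℝ 1 g) (L : ℝ) (x0 x1 : E)
    (hLip : ∀ t ∈ Set.Icc (0:ℝ) 1,
      ‖fderiv ℝ g (x0 + t • (x1 - x0)) - fderiv ℝ g x0‖ ≤ L * (t * ‖x1 - x0‖)) :
    ‖g x1 - g x0 - fderiv ℝ g x0 (x1 - x0)‖ ≤ L / 2 * ‖x1 - x0‖ ^ 2 := by
  set φ : ℝ → E := fun t => g (x0 + t • (x1 - x0)) - t • (fderiv ℝ g x0 (x1 - x0)) - g x0 with hφ
  set φ' : ℝ → E := fun t =>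
    (fderiv ℝ g (x0 + t • (x1 - x0))) (x1 - x0) - fderiv ℝ g x0 (x1 - x0) with hφ'
  have hder : ∀ t : ℝ, HasDerivAt φ (φ' t) t := by
    intro t
    have hline : HasDerivAt (fun t : ℝ => x0 + t • (x1 - x0)) (x1 - x0) t := by
      simpa using ((hasDerivAt_id t).smul_const (x1 - x0)).const_add x0
    have h1 : HasDerivAt (fun t : ℝ => g (x0 + t • (x1 - x0)))
        ((fderiv ℝ g (x0 + t • (x1 - x0))) (x1 - x0)) t :=
      ((hg.differentiable one_ne_zero _).hasFDerivAt).comp_hasDerivAt t hline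
    have h2 : HasDerivAt (fun t : ℝ => t • (fderiv ℝ g x0 (x1 - x0)))
        (fderiv ℝ g x0 (x1 - x0)) t := by
      simpa using (hasDerivAt_id t).smul_const (fderiv ℝ g x0 (x1 - x0))
    exact ((h1.sub h2).sub_const _)
  have hB : ∀ t : ℝ, HasDerivAt (fun t : ℝ => L * ‖x1 - x0‖ ^ 2 * (t ^ 2 / 2))
      (L * ‖x1 - x0‖ ^ 2 * t) t := by
    intro t
    have := (hasDerivAt_pow 2 t).div_const 2
    have := this.const_mul (L * ‖x1 - x0‖ ^ 2)
    refine this.congr_deriv ?_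
    norm_num
  have key := image_norm_le_of_norm_deriv_right_le_deriv_boundary
    (f := φ) (f' := φ') (a := 0) (b := 1)
    (fun t _ => (hder t).continuousAt.continuousWithinAt)
    (fun t _ => (hder t).hasDerivWithinAt)
    (by simp [hφ]) hB
    (fun t ht => by
      have h1 : ‖φ' t‖ ≤ ‖fderiv ℝ g (x0 + t • (x1 - x0)) - fderiv ℝ g x0‖ * ‖x1 - x0‖ := by
        rw [hφ']
        simpa using ContinuousLinearMap.le_opNorm
          (fderiv ℝ g (x0 + t • (x1 - x0)) - fderiv ℝ g x0) (x1 - x0)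
      have h2 := hLip t ⟨ht.1, ht.2.le⟩
      calc ‖φ' t‖ ≤ (L * (t * ‖x1 - x0‖)) * ‖x1 - x0‖ :=
            h1.trans (mul_le_mul_of_nonneg_right h2 (norm_nonneg _))
        _ = L * ‖x1 - x0‖ ^ 2 * t := by ring)
    (right_mem_Icc.2 zero_le_one)
  have hφ1 : φ 1 = g x1 - g x0 - fderiv ℝ g x0 (x1 - x0) := by
    rw [hφ]; simp; abel
  rw [hφ1] at key
  calc ‖g x1 - g x0 - fderiv ℝ g x0 (x1 - x0)‖ ≤ L * ‖x1 - x0‖ ^ 2 * (1 ^ 2 / 2) := key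
    _ = L / 2 * ‖x1 - x0‖ ^ 2 := by ring


lemma final_alg (ρ D r : ℝ) (hρ : 0 < ρ) (hD : 0 ≤ D) (hr : 0 ≤ r)
    (h : r^3 ≤ (1+2*ρ)*D*r^2 + 3*ρ*D^2*r + ρ*D^3) :
    r ≤ (1 + ρ + Real.sqrt ((1+ρ)^2 + ρ)) * D := by
  set w := Real.sqrt ((1+ρ)^2+ρ) with hw
  have hw0 : 0 ≤ w := Real.sqrt_nonneg _
  have hw2 : w^2 = (1+ρ)^2 + ρ := Real.sq_sqrt (by positivity)
  have hwge : 1 + ρ ≤ w := by nlinarith [sq_nonneg (w - (1+ρ))]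
  by_contra hc
  push_neg at hc
  set τ := 1 + ρ + w with hτdef
  rcases eq_or_lt_of_le hD with hD0 | hD0
  · rw [← hD0] at h hc
    simp at h hc
    nlinarith [mul_pos (mul_pos hc hc) hc]
  · have h1 : τ^2 - 2*(1+ρ)*τ - ρ = 0 := by
      rw [hτdef]; nlinarith [hw2]
    have hτ2 : 2*(1+ρ) ≤ τ := by rw [hτdef]; linarith
    have hτpos : (0:ℝ) < τ := by linarith
    have hrpos : 0 < r := lt_trans (mul_pos hτpos hD0) hc
    have h3 : r - (1+2*ρ)*D > 0 := by nlinarith [mul_pos hτpos hD0]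
    have hb : 0 < r^2 + τ*D*r + τ^2*D^2 - (1+2*ρ)*D*(r+τ*D) - 3*ρ*D^2 := by
      nlinarith [mul_pos (sub_pos.2 hc) h3, mul_pos (sub_pos.2 hc) (mul_pos hτpos hD0),
        mul_pos hD0 hD0, mul_pos (mul_pos hD0 hD0) hρ, sq_nonneg ρ,
        mul_nonneg (mul_nonneg (by linarith : (0:ℝ) ≤ τ - (1+2*ρ)) hτpos.le) (mul_pos hD0 hD0).le]
    have hq : r^3 - (1+2*ρ)*D*r^2 - 3*ρ*D^2*r - ρ*D^3
        = 2*τ*D^3 + (r - τ*D)*(r^2 + τ*D*r + τ^2*D^2 - (1+2*ρ)*D*(r+τ*D) - 3*ρ*D^2) := by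
      linear_combination ((τ+1)*D^3) * h1
    nlinarith [mul_pos (sub_pos.2 hc) hb, mul_pos (mul_pos (by linarith : (0:ℝ) < τ) hD0) (mul_pos hD0 hD0)]

theorem stmt3 {n : ℕ} (f : EuclideanSpace ℝ (Fin n) → ℝ)
    (F : Set (EuclideanSpace ℝ (Fin n))) (L σ : ℝ)
    (x xhat xplus : EuclideanSpace ℝ (Fin n))
    (hf : ContDiff ℝ 2 f) (hF : Convex ℝ F) (hL : 0 < L) (hσ : 0 < σ)
    (hx : x ∈ F) (hxhat : xhat ∈ F) (hxplus : xplus ∈ F)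
    (hLip : ∀ z ∈ F, ∀ w ∈ F,
      ‖fderiv ℝ (gradient f) z - fderiv ℝ (gradient f) w‖ ≤ L * ‖z - w‖)
    (hgrad : gradient f xhat = 0)
    (hpsd : ∀ v, 0 ≤ ⟪v, (fderiv ℝ (gradient f) xhat) v⟫)
    (hstat : gradient f x + (fderiv ℝ (gradient f) x) (xplus - x)
        + (σ / 2 * ‖xplus - x‖) • (xplus - x) = 0) :
    ‖xplus - x‖ ≤ (1 + L / σ + Real.sqrt ((1 + L / σ) ^ 2 + L / σ)) * ‖x - xhat‖ := by
  have hgc : ContDiff ℝ 1 (gradient f) := by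
    have h1 : ContDiff ℝ 1 (fderiv ℝ f) := hf.fderiv_right (by norm_num)
    exact ((InnerProductSpace.toDual ℝ (EuclideanSpace ℝ (Fin n))).symm.contDiff
      (𝕜 := ℝ) (n := 1)).comp h1
  set H := fderiv ℝ (gradient f) xhat with hH
  set G := fderiv ℝ (gradient f) x with hG
  set g := gradient f x with hg
  set s := xplus - x with hs
  set d := x - xhat with hd
  set r := ‖s‖ with hr
  set D := ‖d‖ with hD
  have hr0 : 0 ≤ r := norm_nonneg _
  have hD0 : 0 ≤ D := norm_nonneg _
  -- Taylor bound
  have hTay : ‖g - H d‖ ≤ L / 2 * D ^ 2 := by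
    have := taylor_aux (gradient f) hgc L xhat x (fun t ht => by
      have hz : xhat + t • (x - xhat) ∈ F := hF.add_smul_sub_mem hxhat hx ht
      have := hLip _ hz _ hxhat
      calc ‖fderiv ℝ (gradient f) (xhat + t • (x - xhat)) - H‖
          ≤ L * ‖xhat + t • (x - xhat) - xhat‖ := this
        _ = L * (t * ‖x - xhat‖) := by
            rw [add_sub_cancel_left, norm_smul, Real.norm_of_nonneg ht.1])
    simpa [← hg, ← hd, ← hD, hgrad] using this
  -- Hessian Lipschitz bound
  have hGH : ‖G - H‖ ≤ L * D := hLip x hx xhat hxhat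
  -- inner product identity from stationarity
  have hE1 : ⟪s, g⟫ + ⟪s, G s⟫ + σ / 2 * r ^ 3 = 0 := by
    have h0 : ⟪s, g + G s + (σ / 2 * r) • s⟫ = (0:ℝ) := by rw [hstat, inner_zero_right]
    rw [inner_add_right, inner_add_right, real_inner_smul_right,
      real_inner_self_eq_norm_sq] at h0
    have : σ / 2 * r * r ^ 2 = σ / 2 * r ^ 3 := by ring
    linarith
  -- bound ⟪s, g⟫ from below
  have hB1 : ⟪s, H d⟫ - L / 2 * D ^ 2 * r ≤ ⟪s, g⟫ := by
    have h1 : ⟪s, g⟫ - ⟪s, H d⟫ = ⟪s, g - H d⟫ := (inner_sub_right _ _ _).symm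
    have h2 := abs_real_inner_le_norm s (g - H d)
    have h3 : ‖s‖ * ‖g - H d‖ ≤ r * (L / 2 * D ^ 2) :=
      mul_le_mul_of_nonneg_left hTay hr0
    have h4 := neg_abs_le ⟪s, g - H d⟫
    nlinarith [h2, h3, h4]
  -- bound ⟪s, G s⟫ from below
  have hB2 : ⟪s, H s⟫ - L * D * r ^ 2 ≤ ⟪s, G s⟫ := by
    have h1 : ⟪s, G s⟫ - ⟪s, H s⟫ = ⟪s, (G - H) s⟫ := by
      rw [ContinuousLinearMap.sub_apply, inner_sub_right]
    have h2 := abs_real_inner_le_norm s ((G - H) s)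
    have h3 : ‖(G - H) s‖ ≤ (L * D) * ‖s‖ :=
      (ContinuousLinearMap.le_opNorm _ _).trans
        (mul_le_mul_of_nonneg_right hGH (norm_nonneg _))
    have h4 : ‖s‖ * ‖(G - H) s‖ ≤ r * ((L * D) * r) :=
      mul_le_mul_of_nonneg_left h3 hr0
    have h5 := neg_abs_le ⟪s, (G - H) s⟫
    nlinarith [h2, h4, h5]
  -- PSD
  have hPSD : 0 ≤ ⟪s, H s⟫ + ⟪s, H d⟫ + ⟪d, H s⟫ + ⟪d, H d⟫ := by
    have := hpsd (s + d)
    rw [map_add, inner_add_right, inner_add_left, inner_add_left] at this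
    linarith
  -- express H s + H d via stationarity
  have hGs : G s = -(g + (σ / 2 * r) • s) := by
    apply eq_neg_of_add_eq_zero_left
    rw [← hstat]; abel
  have hsum : H s + H d = (H - G) s - (σ / 2 * r) • s - (g - H d) := by
    rw [ContinuousLinearMap.sub_apply, hGs]; abel
  -- bound ⟪d, H s + H d⟫
  have hE4 : ⟪d, H s⟫ + ⟪d, H d⟫ ≤ L * D * (D * r) + σ / 2 * r * (D * r) + D * (L / 2 * D ^ 2) := by
    have h0 : ⟪d, H s⟫ + ⟪d, H d⟫ = ⟪d, (H - G) s⟫ - σ / 2 * r * ⟪d, s⟫ - ⟪d, g - H d⟫ := by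
      rw [← inner_add_right, hsum, inner_sub_right, inner_sub_right, real_inner_smul_right]
    have c1 : |⟪d, (H - G) s⟫| ≤ D * (L * D * r) := by
      refine (abs_real_inner_le_norm _ _).trans ?_
      have h3 : ‖(H - G) s‖ ≤ L * D * ‖s‖ := by
        have := (ContinuousLinearMap.le_opNorm (H - G) s)
        have hHG : ‖H - G‖ ≤ L * D := by
          have h5 := hLip xhat hxhat x hx
          have h6 : ‖xhat - x‖ = D := by rw [hD, hd, norm_sub_rev]
          rw [h6] at h5
          exact h5
        nlinarith [norm_nonneg s, this, hHG]
      exact mul_le_mul_of_nonneg_left h3 hD0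
    have c2 : |⟪d, s⟫| ≤ D * r := abs_real_inner_le_norm _ _
    have c3 : |⟪d, g - H d⟫| ≤ D * (L / 2 * D ^ 2) :=
      (abs_real_inner_le_norm _ _).trans (mul_le_mul_of_nonneg_left hTay hD0)
    have hσr : 0 ≤ σ / 2 * r := by positivity
    have c2' : -(σ / 2 * r * ⟪d, s⟫) ≤ σ / 2 * r * (D * r) := by
      have := neg_abs_le ⟪d, s⟫
      nlinarith [abs_nonneg ⟪d, s⟫]
    rw [h0]
    have e1 := le_abs_self (⟪d, (H - G) s⟫ : ℝ)
    have e2 := neg_abs_le (⟪d, g - H d⟫ : ℝ)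
    linarith [c1, c3, c2', e1, e2]
  -- master inequality
  have master : σ / 2 * r ^ 3 ≤ L / 2 * D ^ 2 * r + L * D * r ^ 2
      + L * D * (D * r) + σ / 2 * r * (D * r) + D * (L / 2 * D ^ 2) := by
    linarith
  -- convert and finish
  have key : r ^ 3 ≤ (1 + 2 * (L / σ)) * D * r ^ 2 + 3 * (L / σ) * D ^ 2 * r + (L / σ) * D ^ 3 := by
    have hσ2 : (0:ℝ) < σ / 2 := by linarith
    rw [← mul_le_mul_iff_right₀ hσ2]
    have hexp : σ / 2 * ((1 + 2 * (L / σ)) * D * r ^ 2 + 3 * (L / σ) * D ^ 2 * r + (L / σ) * D ^ 3)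
        = σ / 2 * D * r ^ 2 + L * D * r ^ 2 + 3 / 2 * L * D ^ 2 * r + L / 2 * D ^ 3 := by
      field_simp
    rw [hexp]
    nlinarith [master]
  exact final_alg (L / σ) D r (by positivity) hD0 hr0 key
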